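/- On the vertices of the order polytope O(P), identified with filters of P (equivalently with order ideals via complementation), the piecewise-linear toggle φ_x acts as the combinatorial toggle τ_x on the complementary order ideal: if f is the indicator function of the filter P \ I, then φ_x f is the indicator function of P \ τ_x(I). -/
import Mathlib


variable {P : Type*} [PartialOrder P]

/-- The augmented poset `P̂ = P ∪ {0̂, 1̂}`. -/
abbrev Phat (P : Type*) := WithBot (WithTop P)

/-- The embedding of `P` into `P̂`. -/
def toPhat (x : P) : Phat P := ((x : WithTop P) : Phat P)

/-- Extension of `f : P → ℝ` to `P̂` with `f(0̂) = 0` and `f(1̂) = 1`. -/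
def fhat (f : P → ℝ) : Phat P → ℝ :=
  WithBot.recBotCoe 0 (WithTop.recTopCoe 1 f)

/-- `L`: the maximum of `f` over elements of `P̂` covered by `x`. -/
noncomputable def Ltog (f : P → ℝ) (x : P) : ℝ :=
  sSup (fhat f '' {y | y ⋖ toPhat x})

/-- `R`: the minimum of `f` over elements of `P̂` covering `x`. -/
noncomputable def Rtog (f : P → ℝ) (x : P) : ℝ :=
  sInf (fhat f '' {y | toPhat x ⋖ y})

open Classical in
/-- The piecewise-linear toggle at `x`. -/
noncomputable def plToggle (x : P) (f : P → ℝ) : P → ℝ :=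
  Function.update f x (Ltog f x + Rtog f x - f x)

open scoped symmDiff
open Classical in
/-- The combinatorial toggle at `x` on subsets of a poset. -/
noncomputable def ctoggle (x : P) (I : Set P) : Set P :=
  if IsLowerSet (I ∆ {x}) then I ∆ {x} else I

/- Auxiliary lemmas -/

lemma fhat_toPhat (f : P → ℝ) (x : P) : fhat f (toPhat x) = f x := rfl

lemma covBy_toPhat_cases {x : P} {y : Phat P} (h : y ⋖ toPhat x) :
    y = ⊥ ∨ ∃ z : P, y = toPhat z ∧ z ⋖ x := by
  induction y using WithBot.recBotCoe with
  | bot => exact Or.inl rfl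
  | coe w =>
    induction w using WithTop.recTopCoe with
    | top => exact absurd (WithBot.coe_lt_coe.mp h.lt) (by simp)
    | coe z =>
      refine Or.inr ⟨z, rfl, ?_⟩
      simpa [toPhat] using h

lemma toPhat_covBy_cases {x : P} {y : Phat P} (h : toPhat x ⋖ y) :
    y = ⊤ ∨ ∃ z : P, y = toPhat z ∧ x ⋖ z := by
  induction y using WithBot.recBotCoe with
  | bot => exact absurd h.lt (by simp)
  | coe w =>
    induction w using WithTop.recTopCoe with
    | top => exact Or.inl rfl
    | coe z =>
      refine Or.inr ⟨z, rfl, ?_⟩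
      simpa [toPhat] using h

lemma exists_covBy_below_toPhat [Fintype P] (x : P) : ∃ y : Phat P, y ⋖ toPhat x := by
  obtain ⟨y, -, hy⟩ := (WithBot.bot_lt_coe _ : (⊥:Phat P) < toPhat x).exists_le_covby
  exact ⟨y, hy⟩

lemma exists_covBy_above_toPhat [Fintype P] (x : P) : ∃ y : Phat P, toPhat x ⋖ y := by
  have h : toPhat x < ⊤ := lt_top_iff_ne_top.mpr (by simp [toPhat])
  obtain ⟨y, hy, -⟩ := h.exists_covby_le
  exact ⟨y, hy⟩

open Classical in
lemma indf_mem (I : Set P) (y : Phat P) :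
    fhat (fun z => if z ∈ I then (0:ℝ) else 1) y = 0 ∨
    fhat (fun z => if z ∈ I then (0:ℝ) else 1) y = 1 := by
  induction y using WithBot.recBotCoe with
  | bot => exact Or.inl rfl
  | coe w =>
    induction w using WithTop.recTopCoe with
    | top => exact Or.inr rfl
    | coe z => by_cases h : z ∈ I <;> simp [fhat, h]

open Classical in
lemma Ltog_eq_zero [Fintype P] (I : Set P) (x : P) (h : ∀ z : P, z ⋖ x → z ∈ I) :
    Ltog (fun z => if z ∈ I then (0:ℝ) else 1) x = 0 := by
  have hset : fhat (fun z => if z ∈ I then (0:ℝ) else 1) '' {y | y ⋖ toPhat x} = {0} := by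
    rw [Set.eq_singleton_iff_nonempty_unique_mem]
    constructor
    · obtain ⟨y, hy⟩ := exists_covBy_below_toPhat x
      exact ⟨_, Set.mem_image_of_mem _ hy⟩
    · rintro a ⟨y, hy, rfl⟩
      rcases covBy_toPhat_cases hy with rfl | ⟨z, rfl, hz⟩
      · rfl
      · simp [fhat_toPhat, h z hz]
  rw [Ltog, hset, csSup_singleton]

open Classical in
lemma Ltog_eq_one [Fintype P] (I : Set P) (x : P) (h : ∃ z : P, z ⋖ x ∧ z ∉ I) :
    Ltog (fun z => if z ∈ I then (0:ℝ) else 1) x = 1 := by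
  obtain ⟨z, hz, hzI⟩ := h
  have hzc : toPhat z ⋖ toPhat x := by simpa [toPhat] using hz
  have hmem : (1:ℝ) ∈ fhat (fun z => if z ∈ I then (0:ℝ) else 1) '' {y | y ⋖ toPhat x} :=
    ⟨toPhat z, hzc, by simp [fhat_toPhat, hzI]⟩
  have hub : ∀ a ∈ fhat (fun z => if z ∈ I then (0:ℝ) else 1) '' {y | y ⋖ toPhat x}, a ≤ 1 := by
    rintro a ⟨y, -, rfl⟩
    rcases indf_mem I y with h' | h' <;> rw [h'] <;> norm_num
  exact le_antisymm (csSup_le ⟨_, hmem⟩ hub) (le_csSup ⟨1, hub⟩ hmem)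

open Classical in
lemma Rtog_eq_one [Fintype P] (I : Set P) (x : P) (h : ∀ z : P, x ⋖ z → z ∉ I) :
    Rtog (fun z => if z ∈ I then (0:ℝ) else 1) x = 1 := by
  have hset : fhat (fun z => if z ∈ I then (0:ℝ) else 1) '' {y | toPhat x ⋖ y} = {1} := by
    rw [Set.eq_singleton_iff_nonempty_unique_mem]
    constructor
    · obtain ⟨y, hy⟩ := exists_covBy_above_toPhat x
      exact ⟨_, Set.mem_image_of_mem _ hy⟩
    · rintro a ⟨y, hy, rfl⟩
      rcases toPhat_covBy_cases hy with rfl | ⟨z, rfl, hz⟩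
      · rfl
      · simp [fhat_toPhat, h z hz]
  rw [Rtog, hset, csInf_singleton]

open Classical in
lemma Rtog_eq_zero [Fintype P] (I : Set P) (x : P) (h : ∃ z : P, x ⋖ z ∧ z ∈ I) :
    Rtog (fun z => if z ∈ I then (0:ℝ) else 1) x = 0 := by
  obtain ⟨z, hz, hzI⟩ := h
  have hzc : toPhat x ⋖ toPhat z := by simpa [toPhat] using hz
  have hmem : (0:ℝ) ∈ fhat (fun z => if z ∈ I then (0:ℝ) else 1) '' {y | toPhat x ⋖ y} :=
    ⟨toPhat z, hzc, by simp [fhat_toPhat, hzI]⟩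
  have hlb : ∀ a ∈ fhat (fun z => if z ∈ I then (0:ℝ) else 1) '' {y | toPhat x ⋖ y}, 0 ≤ a := by
    rintro a ⟨y, -, rfl⟩
    rcases indf_mem I y with h' | h' <;> rw [h'] <;> norm_num
  exact le_antisymm (csInf_le ⟨0, hlb⟩ hmem) (le_csInf ⟨_, hmem⟩ hlb)

open Classical in
theorem plToggle_on_vertices [Fintype P] (x : P) (I : Set P) (hI : IsLowerSet I) :
    plToggle x (fun z => if z ∈ I then (0:ℝ) else 1) =
      fun z => if z ∈ ctoggle x I then (0:ℝ) else 1 := by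
  funext w
  by_cases hwx : w = x
  swap
  · -- away from x nothing changes
    have h1 : plToggle x (fun z => if z ∈ I then (0:ℝ) else 1) w =
        (if w ∈ I then (0:ℝ) else 1) := by
      simp [plToggle, Function.update_of_ne hwx]
    have h2 : w ∈ ctoggle x I ↔ w ∈ I := by
      unfold ctoggle
      split_ifs with h
      · simp [Set.mem_symmDiff, hwx]
      · exact Iff.rfl
    rw [h1]
    by_cases hw : w ∈ I <;> simp [hw, h2]
  subst hwx
  have hupd : plToggle w (fun z => if z ∈ I then (0:ℝ) else 1) w =
      Ltog (fun z => if z ∈ I then (0:ℝ) else 1) w +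
      Rtog (fun z => if z ∈ I then (0:ℝ) else 1) w -
      (if w ∈ I then (0:ℝ) else 1) := by
    simp [plToggle]
  rw [hupd]
  by_cases hwI : w ∈ I
  · -- f w = 0; all elements covered by w lie in I
    have hL : Ltog (fun z => if z ∈ I then (0:ℝ) else 1) w = 0 :=
      Ltog_eq_zero I w (fun z hz => hI hz.le hwI)
    by_cases hA : ∃ z : P, w ⋖ z ∧ z ∈ I
    · -- toggle blocked
      have hR := Rtog_eq_zero I w hA
      obtain ⟨z, hz, hzI⟩ := hA
      have hnl : ¬ IsLowerSet (I ∆ {w}) := by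
        intro hls
        have hzmem : z ∈ I ∆ {w} := by
          simp [Set.mem_symmDiff, hzI, hz.lt.ne']
        have := hls hz.lt.le hzmem
        simp [Set.mem_symmDiff, hwI] at this
      have hct : ctoggle w I = I := by simp [ctoggle, hnl]
      rw [hL, hR, hct]
      simp [hwI]
    · -- toggle removes w
      push_neg at hA
      have hR := Rtog_eq_one I w hA
      have hls : IsLowerSet (I ∆ {w}) := by
        intro a b hba ha
        rw [Set.mem_symmDiff] at ha ⊢
        rcases ha with ⟨haI, haw⟩ | ⟨haw, haI⟩
        · refine Or.inl ⟨hI hba haI, ?_⟩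
          intro hbw
          simp only [Set.mem_singleton_iff] at hbw haw
          subst hbw
          have hlt : b < a := lt_of_le_of_ne hba (fun h => haw h.symm)
          obtain ⟨y, hy, hya⟩ := hlt.exists_covby_le
          exact (hA y hy) (hI hya haI)
        · simp only [Set.mem_singleton_iff] at haw
          subst haw
          exact absurd hwI haI
      have hct : ctoggle w I = I ∆ {w} := by simp [ctoggle, hls]
      have hwmem : w ∉ I ∆ {w} := by simp [Set.mem_symmDiff, hwI]
      rw [hL, hR, hct]
      simp [hwI, hwmem]
  · -- f w = 1; all elements covering w are outside I
    have hR : Rtog (fun z => if z ∈ I then (0:ℝ) else 1) w = 1 :=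
      Rtog_eq_one I w (fun z hz hzI => hwI (hI hz.lt.le hzI))
    by_cases hA : ∃ z : P, z ⋖ w ∧ z ∉ I
    · -- toggle blocked
      have hL := Ltog_eq_one I w hA
      obtain ⟨z, hz, hzI⟩ := hA
      have hnl : ¬ IsLowerSet (I ∆ {w}) := by
        intro hls
        have hwmem : w ∈ I ∆ {w} := by simp [Set.mem_symmDiff, hwI]
        have := hls hz.lt.le hwmem
        simp [Set.mem_symmDiff, hzI, hz.lt.ne] at this
      have hct : ctoggle w I = I := by simp [ctoggle, hnl]
      rw [hL, hR, hct]
      simp [hwI]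
    · -- toggle adds w
      push_neg at hA
      have hA' : ∀ z : P, z ⋖ w → z ∈ I := hA
      have hL := Ltog_eq_zero I w hA'
      have hls : IsLowerSet (I ∆ {w}) := by
        intro a b hba ha
        rw [Set.mem_symmDiff] at ha ⊢
        rcases ha with ⟨haI, haw⟩ | ⟨haw, haI⟩
        · exact Or.inl ⟨hI hba haI, fun hbw => by
            simp only [Set.mem_singleton_iff] at hbw
            subst hbw
            exact hwI (hI hba haI)⟩
        · simp only [Set.mem_singleton_iff] at haw
          rw [haw] at hba
          by_cases hbw : b = w
          · exact Or.inr ⟨by simp [hbw], by rw [hbw]; exact hwI⟩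
          · have hlt : b < w := lt_of_le_of_ne hba hbw
            obtain ⟨y, hy, hyw⟩ := hlt.exists_le_covby
            exact Or.inl ⟨hI hy (hA' _ hyw), fun h => by
              simp only [Set.mem_singleton_iff] at h
              subst h
              exact hwI (hI hy (hA' _ hyw))⟩
      have hct : ctoggle w I = I ∆ {w} := by simp [ctoggle, hls]
      have hwmem : w ∈ I ∆ {w} := by simp [Set.mem_symmDiff, hwI]
      rw [hL, hR, hct]
      simp [hwI, hwmem]
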